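/- arXiv:0910.2087 — 2 statements merged into one kernel-verified Lean document; each statement's English description precedes it below -/
import Mathlib

section
/- For every real ξ ≠ 0 and every ε > 0, the complex number D = −i ξ (1 − coth ξ) + ε² ξ coth ξ satisfies |D| ≥ ε² |ξ|; in particular D ≠ 0. Consequently, for any complex number φ̂, the quantity β̂^ε = φ̂ / D satisfies |β̂^ε| ≤ |φ̂| / (ε² |ξ|). -/
/-- Real hyperbolic cotangent coth ξ = cosh ξ / sinh ξ. -/
noncomputable def realCoth (ξ : ℝ) : ℝ := Real.cosh ξ / Real.sinh ξ

/-- The denominator D = −i ξ (1 − coth ξ) + ε² ξ coth ξ. -/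
noncomputable def stripDen (ξ ε : ℝ) : ℂ :=
  -Complex.I * (ξ : ℂ) * (1 - (realCoth ξ : ℂ)) + (ε : ℂ) ^ 2 * (ξ : ℂ) * (realCoth ξ : ℂ)

lemma realCoth_abs_ge_one (ξ : ℝ) (hξ : ξ ≠ 0) : 1 ≤ |realCoth ξ| := by
  have hs : Real.sinh ξ ≠ 0 := by
    simpa using Real.sinh_ne_zero.mpr hξ
  have hle : |Real.sinh ξ| ≤ Real.cosh ξ := by
    rw [Real.abs_sinh, ← Real.cosh_abs, Real.sinh_eq, Real.cosh_eq]
    have := Real.exp_pos (-|ξ|)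
    linarith
  have hcoshpos := Real.cosh_pos (x := ξ)
  rw [realCoth, abs_div, abs_of_pos hcoshpos]
  rw [le_div_iff₀ (abs_pos.mpr hs)]
  simpa using hle

lemma stripDen_re (ξ ε : ℝ) : (stripDen ξ ε).re = ε ^ 2 * ξ * realCoth ξ := by
  simp [stripDen, ← Complex.ofReal_pow]

/-- for real ξ ≠ 0 and ε > 0, |D| ≥ ε²|ξ|, in particular D ≠ 0, and
for any φ̂ ∈ ℂ the quantity β̂^ε = φ̂/D satisfies |β̂^ε| ≤ |φ̂|/(ε²|ξ|). -/
theorem strip_denominator_lower_bound (ξ ε : ℝ) (hξ : ξ ≠ 0) (hε : 0 < ε) :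
    ε ^ 2 * |ξ| ≤ ‖stripDen ξ ε‖ ∧
    stripDen ξ ε ≠ 0 ∧
    ∀ φ : ℂ, ‖φ / stripDen ξ ε‖ ≤ ‖φ‖ / (ε ^ 2 * |ξ|) := by
  have hpos : 0 < ε ^ 2 * |ξ| := by positivity
  have hlb : ε ^ 2 * |ξ| ≤ ‖stripDen ξ ε‖ := by
    calc ε ^ 2 * |ξ| = ε ^ 2 * |ξ| * 1 := by ring
    _ ≤ ε ^ 2 * |ξ| * |realCoth ξ| := by
        have := realCoth_abs_ge_one ξ hξ
        nlinarith [abs_nonneg ξ]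
    _ = |(stripDen ξ ε).re| := by
        rw [stripDen_re, abs_mul, abs_mul, abs_pow, abs_of_pos hε]
    _ ≤ ‖stripDen ξ ε‖ := Complex.abs_re_le_norm _
  have hne : stripDen ξ ε ≠ 0 := by
    intro h
    rw [h] at hlb
    simp at hlb
    linarith
  refine ⟨hlb, hne, fun φ => ?_⟩
  rw [norm_div, div_le_div_iff₀ (norm_pos_iff.mpr hne) hpos]
  exact mul_le_mul_of_nonneg_left hlb (norm_nonneg φ)
end

section
/- Take the datum φ̂(ξ) = e^{−|ξ|} and define β̂⁰(ξ) = φ̂(ξ) / (−i ξ (1 − coth ξ)) for ξ ≠ 0. Then 2 ξ e^{−ξ} |β̂⁰(ξ)| → 1 as ξ → +∞; in particular, for every N and every C > 0, |β̂⁰(ξ)| > C (1 + |ξ|)^N for all sufficiently large ξ, so β̂⁰ is not polynomially bounded. -/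
open Filter

/-- The limit Fourier boundary trace β̂⁰(ξ) = e^{−|ξ|} / (−i ξ (1 − coth ξ)). -/
noncomputable def betaZero (ξ : ℝ) : ℂ :=
  (Real.exp (-|ξ|) : ℂ) / (-Complex.I * (ξ : ℂ) * (1 - (realCoth ξ : ℂ)))

lemma abs_betaZero (ξ : ℝ) (hξ : 0 < ξ) :
    ‖betaZero ξ‖ = Real.sinh ξ / ξ := by
  have hs : 0 < Real.sinh ξ := Real.sinh_pos_iff.2 hξ
  have h1 : (1 : ℂ) - (realCoth ξ : ℂ) = ((1 - realCoth ξ : ℝ) : ℂ) := by push_cast; ring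
  have habs : |1 - realCoth ξ| = Real.exp (-ξ) / Real.sinh ξ := by
    have h2 : 1 - realCoth ξ = -(Real.exp (-ξ) / Real.sinh ξ) := by
      unfold realCoth
      field_simp
      linarith [Real.cosh_sub_sinh ξ]
    rw [h2, abs_neg, abs_of_pos (div_pos (Real.exp_pos _) hs)]
  unfold betaZero
  rw [norm_div, h1]
  simp only [norm_mul, norm_neg, Complex.norm_I, Complex.norm_real, Real.norm_eq_abs, one_mul,
    abs_of_pos hξ, habs, abs_of_pos (Real.exp_pos (-ξ))]
  rw [div_eq_div_iff (by positivity) hξ.ne']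
  field_simp

/-- with datum φ̂(ξ) = e^{−|ξ|}, one has 2 ξ e^{−ξ} |β̂⁰(ξ)| → 1 as
ξ → +∞; in particular, for every N and C > 0, |β̂⁰(ξ)| > C (1 + |ξ|)^N for all
sufficiently large ξ, so β̂⁰ is not polynomially bounded. -/
theorem limit_trace_not_tempered :
    Tendsto (fun ξ : ℝ => 2 * ξ * Real.exp (-ξ) * ‖betaZero ξ‖)
      atTop (nhds 1) ∧
    ∀ (N : ℕ) (C : ℝ), 0 < C →
      ∀ᶠ ξ : ℝ in atTop, C * (1 + |ξ|) ^ N < ‖betaZero ξ‖ := by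
  constructor
  · have heq : (fun ξ : ℝ => 2 * ξ * Real.exp (-ξ) * ‖betaZero ξ‖)
        =ᶠ[atTop] fun ξ => 1 - Real.exp (-(2 * ξ)) := by
      filter_upwards [eventually_gt_atTop (0 : ℝ)] with ξ hξ
      rw [abs_betaZero ξ hξ, Real.sinh_eq]
      simp only [Real.exp_neg]
      rw [two_mul, Real.exp_add]
      have he : Real.exp ξ ≠ 0 := (Real.exp_pos ξ).ne'
      field_simp
      ring
    refine Tendsto.congr' heq.symm ?_
    have h2t : Tendsto (fun ξ : ℝ => 2 * ξ) atTop atTop :=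
      tendsto_atTop_atTop_of_monotone (fun a b hab => by linarith)
        (fun b => ⟨|b|, le_trans (le_abs_self b) (by linarith [abs_nonneg b])⟩)
    have : Tendsto (fun ξ : ℝ => Real.exp (-(2 * ξ))) atTop (nhds 0) := by
      apply Real.tendsto_exp_atBot.comp
      exact tendsto_neg_atBot_iff.2 h2t
    have := this.const_sub 1
    simpa using this
  · intro N C hC
    have hpow := Real.tendsto_exp_div_pow_atTop (N + 1)
    filter_upwards [eventually_ge_atTop (1 : ℝ),
      hpow.eventually_gt_atTop (4 * C * 2 ^ N)] with ξ h1 h2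
    rw [abs_betaZero ξ (by linarith)]
    rw [abs_of_pos (by linarith : (0:ℝ) < ξ)]
    have hξ : (0:ℝ) < ξ := by linarith
    have he2 : (2:ℝ) ≤ Real.exp ξ := by
      calc (2:ℝ) ≤ Real.exp 1 := by
            have := Real.add_one_le_exp (1:ℝ); linarith
        _ ≤ Real.exp ξ := Real.exp_le_exp.2 h1
    have hsinh : Real.exp ξ / 4 ≤ Real.sinh ξ := by
      rw [Real.sinh_eq]
      have : Real.exp (-ξ) ≤ 1 := Real.exp_le_one_iff.2 (by linarith)
      nlinarith
    have hb : C * (1 + ξ) ^ N ≤ C * 2 ^ N * ξ ^ N := by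
      rw [mul_assoc]
      refine mul_le_mul_of_nonneg_left ?_ hC.le
      rw [← mul_pow]
      exact pow_le_pow_left₀ (by linarith) (by linarith) N
    have hexp : 4 * C * 2 ^ N * ξ ^ (N+1) < Real.exp ξ := by
      have hp : (0:ℝ) < ξ ^ (N+1) := pow_pos hξ _
      rw [lt_div_iff₀ hp] at h2
      linarith
    have key : C * 2 ^ N * ξ ^ N < Real.sinh ξ / ξ := by
      rw [lt_div_iff₀ hξ]
      calc C * 2 ^ N * ξ ^ N * ξ = C * 2 ^ N * ξ ^ (N+1) := by ring
        _ < Real.exp ξ / 4 := by linarith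
        _ ≤ Real.sinh ξ := hsinh
    linarith
end
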